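/- arXiv:2303.09365 — 3 statements merged into one kernel-verified Lean document; each statement's English description precedes it below -/
import Mathlib

section
/- If G is a bipartite graph and k ≥ 2 is an integer, then Kc(G, k) = 1; that is, any two proper k-colorings of G are Kempe-k-equivalent. -/
open SimpleGraph

/-- The spanning subgraph of `G` consisting of the edges both of whose endpoints
receive color `i` or color `j` under `φ`. -/
def kempeSubgraph {V : Type*} (G : SimpleGraph V) {k : ℕ} (φ : V → Fin k) (i j : Fin k) :
    SimpleGraph V where
  Adj u v := G.Adj u v ∧ (φ u = i ∨ φ u = j) ∧ (φ v = i ∨ φ v = j)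
  symm := ⟨fun u v ⟨h, hu, hv⟩ => ⟨h.symm, hv, hu⟩⟩
  loopless := ⟨fun v h => G.irrefl h.1⟩

/-- `ψ` is obtained from `φ` by a single `i,j`-Kempe swap:  the colors `i` and `j` are
interchanged on the connected component (of the subgraph induced by colors `i,j`)
containing `w`, and nothing else changes. -/
def IsKempeSwap {V : Type*} (G : SimpleGraph V) {k : ℕ}
    (φ ψ : G.Coloring (Fin k)) : Prop :=
  ∃ (i j : Fin k) (w : V), ∀ v : V,
    ((kempeSubgraph G (fun x => φ x) i j).Reachable w v → ψ v = Equiv.swap i j (φ v)) ∧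
    (¬ (kempeSubgraph G (fun x => φ x) i j).Reachable w v → ψ v = φ v)

/-- Kempe `k`-equivalence of proper `k`-colorings:  one can be transformed into the
other by a sequence of Kempe swaps. -/
def KempeEquiv {V : Type*} (G : SimpleGraph V) (k : ℕ)
    (φ ψ : G.Coloring (Fin k)) : Prop :=
  Relation.EqvGen (IsKempeSwap G) φ ψ

/-- `Kc G k` is the number of Kempe equivalence classes of proper `k`-colorings of `G`. -/
noncomputable def Kc {V : Type*} (G : SimpleGraph V) (k : ℕ) : ℕ :=
  Nat.card (Quot (KempeEquiv G k))

/-- `G` can be obtained from a bipartite graph by adding `ℓ` edges. -/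
def BipartitePlus {V : Type*} (G : SimpleGraph V) (ℓ : ℕ) : Prop :=
  ∃ E : Finset (Sym2 V), E.card = ℓ ∧ ↑E ⊆ G.edgeSet ∧
    (G.deleteEdges ↑E).Colorable 2

section Aux

variable {V : Type*} {k : ℕ}

open Classical in
/-- The result of the `i,j`-Kempe swap at `w` applied to `φ`. -/
noncomputable def kempeFun (G : SimpleGraph V) (φ : V → Fin k) (i j : Fin k) (w v : V) : Fin k :=
  if (kempeSubgraph G φ i j).Reachable w v then Equiv.swap i j (φ v) else φ v

lemma kempeFun_valid (G : SimpleGraph V) (φ : G.Coloring (Fin k)) (i j : Fin k) (w : V)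
    {u v : V} (huv : G.Adj u v) :
    kempeFun G (fun x => φ x) i j w u ≠ kempeFun G (fun x => φ x) i j w v := by
  classical
  have hne : φ u ≠ φ v := φ.valid huv
  unfold kempeFun
  by_cases hu : (kempeSubgraph G (fun x => φ x) i j).Reachable w u <;>
    by_cases hv : (kempeSubgraph G (fun x => φ x) i j).Reachable w v
  · rw [if_pos hu, if_pos hv]
    exact fun h => hne (Equiv.injective _ h)
  · rw [if_pos hu, if_neg hv]
    intro h
    by_cases hmem : φ u = i ∨ φ u = j
    · beta_reduce at h
      have hvm : φ v = i ∨ φ v = j := by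
        rcases hmem with h1 | h1 <;> rw [← h] <;> rw [h1] <;> simp
      exact hv (hu.trans (SimpleGraph.Adj.reachable ⟨huv, hmem, hvm⟩))
    · push_neg at hmem
      beta_reduce at h
      rw [Equiv.swap_apply_of_ne_of_ne hmem.1 hmem.2] at h
      exact hne h
  · rw [if_neg hu, if_pos hv]
    intro h
    by_cases hmem : φ v = i ∨ φ v = j
    · beta_reduce at h
      have hum : φ u = i ∨ φ u = j := by
        rcases hmem with h1 | h1 <;> rw [h] <;> rw [h1] <;> simp
      exact hu (hv.trans (SimpleGraph.Adj.reachable ⟨huv.symm, hmem, hum⟩))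
    · push_neg at hmem
      beta_reduce at h
      rw [Equiv.swap_apply_of_ne_of_ne hmem.1 hmem.2] at h
      exact hne h
  · rw [if_neg hu, if_neg hv]; exact hne

/-- The coloring obtained by a Kempe swap. -/
noncomputable def kempeColor (G : SimpleGraph V) (φ : G.Coloring (Fin k)) (i j : Fin k)
    (w : V) : G.Coloring (Fin k) :=
  SimpleGraph.Coloring.mk (kempeFun G (fun x => φ x) i j w)
    (fun h => kempeFun_valid G φ i j w h)

lemma isKempeSwap_kempeColor (G : SimpleGraph V) (φ : G.Coloring (Fin k)) (i j : Fin k)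
    (w : V) : IsKempeSwap G φ (kempeColor G φ i j w) := by
  classical
  refine ⟨i, j, w, fun v => ⟨fun h => ?_, fun h => ?_⟩⟩
  · show kempeFun G (fun x => φ x) i j w v = _
    unfold kempeFun; rw [if_pos h]
  · show kempeFun G (fun x => φ x) i j w v = _
    unfold kempeFun; rw [if_neg h]

lemma fin2_cases : ∀ a b d : Fin 2, a ≠ b → a ≠ d → b = d := by decide

/-- Invariant along components of the Kempe subgraph, for bipartite graphs. -/
lemma kempe_reach_inv (G : SimpleGraph V) (c : G.Coloring (Fin 2)) (φ : G.Coloring (Fin k))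
    (v : V) (i t : Fin k) (hit : i ≠ t) (hφv : φ v = i) {u : V}
    (h : (kempeSubgraph G (fun x => φ x) i t).Reachable v u) :
    (c u = c v ∧ φ u = i) ∨ (c u ≠ c v ∧ φ u = t) := by
  obtain ⟨p⟩ := h
  have key : ∀ {a b : V} (_ : (kempeSubgraph G (fun x => φ x) i t).Walk a b),
      ((c a = c v ∧ φ a = i) ∨ (c a ≠ c v ∧ φ a = t)) →
      ((c b = c v ∧ φ b = i) ∨ (c b ≠ c v ∧ φ b = t)) := by
    intro a b p
    induction p with
    | nil => exact id
    | cons hadj p ih =>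
      rename_i x y z
      intro hx
      apply ih
      obtain ⟨hG, hxm, hym⟩ := hadj
      have hcxy : c x ≠ c y := c.valid hG
      have hφxy : φ x ≠ φ y := φ.valid hG
      rcases hx with ⟨hc, hφ⟩ | ⟨hc, hφ⟩
      · right
        refine ⟨fun h => hcxy (by rw [h, hc]), ?_⟩
        rcases hym with h1 | h1
        · exact absurd (hφ.trans h1.symm) hφxy
        · exact h1
      · left
        refine ⟨fin2_cases (c x) (c y) (c v) hcxy hc, ?_⟩
        rcases hym with h1 | h1
        · exact h1
        · exact absurd (hφ.trans h1.symm) hφxy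
  exact key p (Or.inl ⟨rfl, hφv⟩)

variable [Fintype V]

open Classical in
noncomputable def kempeWeight (G : SimpleGraph V) (c : G.Coloring (Fin 2)) (hk : 2 ≤ k)
    (φ : G.Coloring (Fin k)) : ℕ :=
  (Finset.univ.filter (fun x => φ x ≠ Fin.castLE hk (c x))).card

/-- The canonical coloring from the bipartition. -/
def baseColoring (G : SimpleGraph V) (c : G.Coloring (Fin 2)) (hk : 2 ≤ k) :
    G.Coloring (Fin k) :=
  SimpleGraph.Coloring.mk (fun x => Fin.castLE hk (c x))
    (fun h hc => c.valid h (Fin.castLE_injective hk hc))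

lemma kempe_to_base (G : SimpleGraph V) (c : G.Coloring (Fin 2)) (hk : 2 ≤ k)
    (φ : G.Coloring (Fin k)) : KempeEquiv G k φ (baseColoring G c hk) := by
  classical
  generalize hn : kempeWeight G c hk φ = n
  induction n using Nat.strong_induction_on generalizing φ with
  | _ n ih =>
    rcases Nat.eq_zero_or_pos n with h0 | hpos
    · subst h0
      have : ∀ x, φ x = Fin.castLE hk (c x) := by
        intro x
        by_contra hx
        have : x ∈ Finset.univ.filter (fun x => φ x ≠ Fin.castLE hk (c x)) := by
          simp [hx]
        rw [Finset.card_eq_zero.mp hn] at this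
        simp at this
      have : φ = baseColoring G c hk := by
        apply DFunLike.ext
        intro x; exact this x
      rw [this]
      exact Relation.EqvGen.refl _
    · -- pick an incorrect vertex
      have hne0 : (Finset.univ.filter (fun x => φ x ≠ Fin.castLE hk (c x))).Nonempty := by
        exact Finset.card_pos.mp (lt_of_lt_of_eq hpos hn.symm)
      obtain ⟨v, hv⟩ := hne0
      rw [Finset.mem_filter] at hv
      have hvne : φ v ≠ Fin.castLE hk (c v) := hv.2
      set i := φ v with hi
      set t := Fin.castLE hk (c v) with ht
      have hit : i ≠ t := hvne
      set ψ := kempeColor G φ i t v with hψ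
      have hswap : IsKempeSwap G φ ψ := isKempeSwap_kempeColor G φ i t v
      -- compute ψ values
      have hψval : ∀ u, ψ u = kempeFun G (fun x => φ x) i t v u := fun u => rfl
      -- new incorrect set is a strict subset
      have hsub : Finset.univ.filter (fun x => ψ x ≠ Fin.castLE hk (c x)) ⊂
          Finset.univ.filter (fun x => φ x ≠ Fin.castLE hk (c x)) := by
        constructor
        · intro u hu
          rw [Finset.mem_filter] at hu ⊢
          refine ⟨Finset.mem_univ u, ?_⟩
          intro hcorrect
          apply hu.2
          rw [hψval u]; unfold kempeFun
          by_cases hr : (kempeSubgraph G (fun x => φ x) i t).Reachable v u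
          · exfalso
            rcases kempe_reach_inv G c φ v i t hit hi.symm hr with ⟨hc1, hφ1⟩ | ⟨hc1, hφ1⟩
            · exact hit (by rw [← hφ1, hcorrect, ht, hc1])
            · apply hc1
              have : Fin.castLE hk (c u) = Fin.castLE hk (c v) := by
                rw [← hcorrect, hφ1, ht]
              exact Fin.castLE_injective hk this
          · rw [if_neg hr]; exact hcorrect
        · intro hall
          have hvmem : v ∈ Finset.univ.filter (fun x => φ x ≠ Fin.castLE hk (c x)) := by
            rw [Finset.mem_filter]; exact ⟨Finset.mem_univ v, hvne⟩
          have := hall hvmem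
          rw [Finset.mem_filter] at this
          apply this.2
          rw [hψval v]; unfold kempeFun
          rw [if_pos (SimpleGraph.Reachable.refl v)]
          beta_reduce
          rw [← hi, Equiv.swap_apply_left, ht]
      have hlt : kempeWeight G c hk ψ < n := by
        rw [← hn]
        exact Finset.card_lt_card hsub
      have hrest := ih _ hlt ψ rfl
      exact Relation.EqvGen.trans _ _ _ (Relation.EqvGen.rel _ _ hswap) hrest

end Aux

/-- If `G` is bipartite and `k ≥ 2`, then all `k`-colorings of `G` are Kempe
`k`-equivalent, i.e. `Kc(G,k) = 1`. -/
theorem stmt10 {V : Type*} [Fintype V] (G : SimpleGraph V) (hG : G.Colorable 2)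
    (k : ℕ) (hk : 2 ≤ k) : Kc G k = 1 := by
  obtain ⟨c⟩ := hG
  have hall : ∀ a b : G.Coloring (Fin k), KempeEquiv G k a b := by
    intro a b
    exact Relation.EqvGen.trans _ _ _ (kempe_to_base G c hk a)
      (Relation.EqvGen.symm _ _ (kempe_to_base G c hk b))
  rw [Kc, Nat.card_eq_one_iff_unique]
  constructor
  · constructor
    intro x y
    induction x using Quot.ind with | _ a =>
    induction y using Quot.ind with | _ b =>
    exact Quot.sound (hall a b)
  · exact ⟨Quot.mk _ (baseColoring G c hk)⟩
end

section
/- Let J be a graph and let J′ be the graph obtained from J by adding a new vertex v adjacent to every vertex of J. Then Kc(J, χ(J) + 1) = 1 if and only if Kc(J′, χ(J′) + 1) = 1, where χ denotes chromatic number. -/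
open SimpleGraph

/-- The graph obtained from `J` by adding a new dominating vertex (`none`). -/
def addDominating {V : Type*} (J : SimpleGraph V) : SimpleGraph (Option V) where
  Adj u v := u ≠ v ∧ ∀ a b : V, u = some a → v = some b → J.Adj a b
  symm := by
    constructor
    rintro u v ⟨hne, h⟩
    exact ⟨hne.symm, fun a b ha hb => (h b a hb ha).symm⟩
  loopless := ⟨fun u h => h.1 rfl⟩

namespace KempeWork

attribute [local instance] Classical.propDecidable

variable {V : Type*} {G : SimpleGraph V} {k : ℕ}

/-! ### Part 1: swapping colors on a union of Kempe components -/

lemma mem_pair_swap {i j x : Fin k} (h : x = i ∨ x = j) :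
    Equiv.swap i j x = i ∨ Equiv.swap i j x = j := by
  rcases h with h | h <;> subst h <;> simp

lemma swap_eq_self {i j x : Fin k} (h : ¬(x = i ∨ x = j)) : Equiv.swap i j x = x :=
  Equiv.swap_apply_of_ne_of_ne (by tauto) (by tauto)

/-- Swap colors `i,j` on the set `S`. -/
noncomputable def swapOn (φ : V → Fin k) (i j : Fin k) (S : Set V) : V → Fin k :=
  fun v => if v ∈ S then Equiv.swap i j (φ v) else φ v

lemma swapOn_mem {φ : V → Fin k} {i j : Fin k} {S : Set V} {v : V} (h : v ∈ S) :
    swapOn φ i j S v = Equiv.swap i j (φ v) := if_pos h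

lemma swapOn_not_mem {φ : V → Fin k} {i j : Fin k} {S : Set V} {v : V} (h : v ∉ S) :
    swapOn φ i j S v = φ v := if_neg h

lemma swapOn_colored (φ : V → Fin k) (i j : Fin k) (S : Set V) (v : V) :
    (φ v = i ∨ φ v = j) ↔ (swapOn φ i j S v = i ∨ swapOn φ i j S v = j) := by
  by_cases hv : v ∈ S
  · rw [swapOn_mem hv]
    constructor
    · exact mem_pair_swap
    · intro h; by_contra hc; rw [swap_eq_self hc] at h; exact hc h
  · rw [swapOn_not_mem hv]

lemma kempeSubgraph_congr {φ ψ : V → Fin k} {i j : Fin k}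
    (h : ∀ v, (φ v = i ∨ φ v = j) ↔ (ψ v = i ∨ ψ v = j)) :
    kempeSubgraph G φ i j = kempeSubgraph G ψ i j := by
  ext u v
  show G.Adj u v ∧ _ ∧ _ ↔ G.Adj u v ∧ _ ∧ _
  rw [h u, h v]

lemma swapOn_proper (φ : G.Coloring (Fin k)) (i j : Fin k) (S : Set V)
    (hS : ∀ ⦃u v : V⦄, u ∈ S → (kempeSubgraph G (fun x => φ x) i j).Reachable u v → v ∈ S) :
    ∀ {a b : V}, G.Adj a b →
      swapOn (fun x => φ x) i j S a ≠ swapOn (fun x => φ x) i j S b := by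
  have key : ∀ a b : V, a ∈ S → b ∉ S → G.Adj a b →
      Equiv.swap i j (φ a) ≠ φ b := by
    intro a b ha hb hab
    have hne := φ.valid hab
    by_cases hca : φ a = i ∨ φ a = j
    · by_cases hcb : φ b = i ∨ φ b = j
      · exact absurd (hS ha (SimpleGraph.Adj.reachable ⟨hab, hca, hcb⟩)) hb
      · intro h; exact hcb (h ▸ mem_pair_swap hca)
    · rw [swap_eq_self hca]; exact hne
  intro a b hab
  have hne := φ.valid hab
  by_cases ha : a ∈ S <;> by_cases hb : b ∈ S
  · rw [swapOn_mem ha, swapOn_mem hb]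
    exact fun h => hne (Equiv.injective _ h)
  · rw [swapOn_mem ha, swapOn_not_mem hb]
    exact key a b ha hb hab
  · rw [swapOn_not_mem ha, swapOn_mem hb]
    exact fun h => key b a hb ha hab.symm h.symm
  · rw [swapOn_not_mem ha, swapOn_not_mem hb]
    exact hne

lemma kempeEquiv_swapOn_aux [Fintype V] :
    ∀ (N : ℕ) (φ ψ : G.Coloring (Fin k)) (i j : Fin k) (S : Set V),
      (S ∩ {v | φ v = i ∨ φ v = j}).ncard ≤ N →
      (∀ ⦃u v : V⦄, u ∈ S → (kempeSubgraph G (fun x => φ x) i j).Reachable u v → v ∈ S) →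
      (∀ v, ψ v = swapOn (fun x => φ x) i j S v) →
      KempeEquiv G k φ ψ := by
  have base : ∀ (φ ψ : G.Coloring (Fin k)) (i j : Fin k) (S : Set V),
      S ∩ {v | φ v = i ∨ φ v = j} = ∅ →
      (∀ v, ψ v = swapOn (fun x => φ x) i j S v) →
      KempeEquiv G k φ ψ := by
    intro φ ψ i j S hempty hψ
    have : ψ = φ := by
      apply DFunLike.ext
      intro v
      rw [hψ v]
      by_cases hv : v ∈ S
      · rw [swapOn_mem hv]
        have hc : ¬(φ v = i ∨ φ v = j) := fun hc =>
          Set.eq_empty_iff_forall_notMem.mp hempty v ⟨hv, hc⟩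
        exact swap_eq_self hc
      · exact swapOn_not_mem hv
    rw [this]
    exact Relation.EqvGen.refl _
  intro N
  induction N with
  | zero =>
    intro φ ψ i j S hcard hS hψ
    exact base φ ψ i j S (by rw [← Set.ncard_eq_zero (Set.toFinite _)]; omega) hψ
  | succ N ih =>
    intro φ ψ i j S hcard hS hψ
    by_cases hempty : S ∩ {v | φ v = i ∨ φ v = j} = ∅
    · exact base φ ψ i j S hempty hψ
    · obtain ⟨w, hwS, hwc⟩ := Set.nonempty_iff_ne_empty.mpr hempty
      set C : Set V := {v | (kempeSubgraph G (fun x => φ x) i j).Reachable w v} with hC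
      have hCclosed : ∀ ⦃u v : V⦄, u ∈ C →
          (kempeSubgraph G (fun x => φ x) i j).Reachable u v → v ∈ C :=
        fun u v hu huv => hu.trans huv
      have hCS : C ⊆ S := fun v hv => hS hwS hv
      let φ₁ : G.Coloring (Fin k) :=
        Coloring.mk (swapOn (fun x => φ x) i j C) (swapOn_proper φ i j C hCclosed)
      have hφ₁ : ∀ v, φ₁ v = swapOn (fun x => φ x) i j C v := fun v => rfl
      have hswap : IsKempeSwap G φ φ₁ := by
        refine ⟨i, j, w, fun v => ⟨fun h => ?_, fun h => ?_⟩⟩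
        · rw [hφ₁]; exact swapOn_mem h
        · rw [hφ₁]; exact swapOn_not_mem h
      have hsub : kempeSubgraph G (fun x => φ₁ x) i j
          = kempeSubgraph G (fun x => φ x) i j :=
        kempeSubgraph_congr (fun v => (swapOn_colored (fun x => φ x) i j C v).symm)
      have hcolored : {v | φ₁ v = i ∨ φ₁ v = j} = {v | φ v = i ∨ φ v = j} := by
        ext v; exact (swapOn_colored (fun x => φ x) i j C v).symm
      refine Relation.EqvGen.trans _ _ _ (Relation.EqvGen.rel _ _ hswap)
        (ih φ₁ ψ i j (S \ C) ?_ ?_ ?_)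
      · rw [hcolored]
        have hsubset : (S \ C) ∩ {v | φ v = i ∨ φ v = j}
            ⊆ (S ∩ {v | φ v = i ∨ φ v = j}) \ {w} := by
          rintro v ⟨⟨hvS, hvC⟩, hvc⟩
          refine ⟨⟨hvS, hvc⟩, fun hvw => hvC ?_⟩
          rw [Set.mem_singleton_iff] at hvw
          subst hvw
          exact SimpleGraph.Reachable.refl v
        have h1 := Set.ncard_le_ncard hsubset (Set.toFinite _)
        have h2 : ((S ∩ {v | φ v = i ∨ φ v = j}) \ {w}).ncard
            < (S ∩ {v | φ v = i ∨ φ v = j}).ncard :=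
          Set.ncard_diff_singleton_lt_of_mem ⟨hwS, hwc⟩ (Set.toFinite _)
        omega
      · intro u v hu huv
        rw [hsub] at huv
        refine ⟨hS hu.1 huv, fun hv => hu.2 ?_⟩
        exact hv.trans huv.symm
      · intro v
        rw [hψ v]
        by_cases hvC : v ∈ C
        · have hnm : v ∉ S \ C := fun h => h.2 hvC
          rw [swapOn_mem (hCS hvC), swapOn_not_mem hnm, hφ₁, swapOn_mem hvC]
        · by_cases hvS : v ∈ S
          · have hm : v ∈ S \ C := ⟨hvS, hvC⟩
            rw [swapOn_mem hvS, swapOn_mem hm, hφ₁, swapOn_not_mem hvC]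
          · have hnm : v ∉ S \ C := fun h => hvS h.1
            rw [swapOn_not_mem hvS, swapOn_not_mem hnm, hφ₁, swapOn_not_mem hvC]

lemma kempeEquiv_swapOn [Fintype V] (φ ψ : G.Coloring (Fin k)) (i j : Fin k) (S : Set V)
    (hS : ∀ ⦃u v : V⦄, u ∈ S → (kempeSubgraph G (fun x => φ x) i j).Reachable u v → v ∈ S)
    (hψ : ∀ v, ψ v = swapOn (fun x => φ x) i j S v) :
    KempeEquiv G k φ ψ :=
  kempeEquiv_swapOn_aux (S ∩ {v | φ v = i ∨ φ v = j}).ncard φ ψ i j S le_rfl hS hψ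

/-! ### Part 2: extension and restriction of colorings for `addDominating` -/

variable {J : SimpleGraph V}

lemma adj_some_some {a b : V} : (addDominating J).Adj (some a) (some b) ↔ J.Adj a b := by
  constructor
  · intro h; exact h.2 a b rfl rfl
  · intro h
    refine ⟨?_, ?_⟩
    · intro he
      rw [Option.some_inj] at he
      subst he
      exact J.irrefl h
    · intro a' b' ha hb
      rw [Option.some_inj] at ha hb
      subst ha; subst hb
      exact h

lemma adj_none_some (a : V) : (addDominating J).Adj none (some a) :=
  ⟨fun h => (by cases h), fun a' b' h => (by cases h)⟩

/-- Extend a coloring of `J` to `addDominating J` by giving `none` the new color `last`. -/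
def extColoring {m : ℕ} (φ : J.Coloring (Fin m)) :
    (addDominating J).Coloring (Fin (m + 1)) :=
  Coloring.mk (fun v => v.elim (Fin.last m) (fun a => (φ a).castSucc)) (by
    rintro (_ | a) (_ | b) hadj
    · exact absurd rfl hadj.1
    · exact fun h => absurd h.symm (Fin.castSucc_lt_last (φ b)).ne
    · exact fun h => absurd h (Fin.castSucc_lt_last (φ a)).ne
    · intro h
      exact φ.valid (adj_some_some.mp hadj) (Fin.castSucc_injective _ h))

lemma reach_down {m : ℕ} (α : Option V → Fin m) (i j : Fin m)
    (hnone : ¬(α none = i ∨ α none = j)) {a : V} {x : Option V}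
    (h : (kempeSubgraph (addDominating J) α i j).Reachable (some a) x) :
    ∃ b : V, x = some b ∧
      (kempeSubgraph J (fun u => α (some u)) i j).Reachable a b := by
  rw [SimpleGraph.reachable_iff_reflTransGen] at h
  induction h with
  | refl => exact ⟨a, rfl, SimpleGraph.Reachable.refl a⟩
  | tail hxy hadj ih =>
    obtain ⟨b, rfl, hab⟩ := ih
    rename_i z
    match z with
    | none => exact absurd hadj.2.2 hnone
    | some c =>
      refine ⟨c, rfl, hab.trans (SimpleGraph.Adj.reachable ?_)⟩
      exact ⟨adj_some_some.mp hadj.1, hadj.2.1, hadj.2.2⟩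

lemma reach_up {m : ℕ} (α : Option V → Fin m) (i j : Fin m) {a b : V}
    (h : (kempeSubgraph J (fun u => α (some u)) i j).Reachable a b) :
    (kempeSubgraph (addDominating J) α i j).Reachable (some a) (some b) := by
  let f : kempeSubgraph J (fun u => α (some u)) i j →g
      kempeSubgraph (addDominating J) α i j :=
    ⟨some, fun {u v} h => ⟨adj_some_some.mpr h.1, h.2.1, h.2.2⟩⟩
  exact h.map f

lemma reach_none {m : ℕ} (α : Option V → Fin m) (i j : Fin m)
    (hnone : ¬(α none = i ∨ α none = j)) {x : Option V}
    (h : (kempeSubgraph (addDominating J) α i j).Reachable none x) : x = none := by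
  rw [SimpleGraph.reachable_iff_reflTransGen] at h
  rcases (Relation.ReflTransGen.cases_head h) with h | ⟨y, hadj, _⟩
  · exact h.symm
  · exact absurd hadj.2.1 hnone

lemma castPred_eq_castPred {m : ℕ} {x y : Fin (m + 1)} {hx : x ≠ Fin.last m}
    {hy : y ≠ Fin.last m} (h : x = y) : x.castPred hx = y.castPred hy := by
  subst h; rfl

lemma swap_ne_last {m : ℕ} {c x : Fin (m + 1)} (hx : x ≠ c) :
    Equiv.swap c (Fin.last m) x ≠ Fin.last m := by
  intro h
  have h2 := congrArg (Equiv.swap c (Fin.last m)) h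
  rw [Equiv.swap_apply_self, Equiv.swap_apply_right] at h2
  exact hx h2

/-- Restrict a coloring of `addDominating J` to a coloring of `J` with one fewer
color, relabelling so that `none` would receive the last color. -/
def resColoring {m : ℕ} (α : (addDominating J).Coloring (Fin (m + 1))) :
    J.Coloring (Fin m) :=
  Coloring.mk
    (fun a => (Equiv.swap (α none) (Fin.last m) (α (some a))).castPred
      (swap_ne_last (α.valid (adj_none_some a)).symm))
    (by
      intro a b hadj h
      have h2 := Fin.castPred_inj.mp h
      exact α.valid (adj_some_some.mpr hadj) (Equiv.injective _ h2))

lemma resColoring_apply {m : ℕ} (α : (addDominating J).Coloring (Fin (m + 1))) (a : V) :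
    resColoring α a = (Equiv.swap (α none) (Fin.last m) (α (some a))).castPred
      (swap_ne_last (α.valid (adj_none_some a)).symm) := rfl

lemma res_ext {m : ℕ} (φ : J.Coloring (Fin m)) : resColoring (extColoring φ) = φ := by
  apply DFunLike.ext
  intro a
  rw [resColoring_apply (extColoring φ) a]
  apply Fin.castSucc_injective
  rw [Fin.castSucc_castPred]
  show Equiv.swap (Fin.last m) (Fin.last m) ((φ a).castSucc) = (φ a).castSucc
  rw [Equiv.swap_self]
  rfl

lemma swap_castSucc {m : ℕ} (i j x : Fin m) :
    Equiv.swap i.castSucc j.castSucc x.castSucc = (Equiv.swap i j x).castSucc := by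
  rcases eq_or_ne x i with rfl | hxi
  · rw [Equiv.swap_apply_left, Equiv.swap_apply_left]
  rcases eq_or_ne x j with rfl | hxj
  · rw [Equiv.swap_apply_right, Equiv.swap_apply_right]
  · rw [Equiv.swap_apply_of_ne_of_ne hxi hxj,
      Equiv.swap_apply_of_ne_of_ne (fun h => hxi (Fin.castSucc_inj.mp h))
        (fun h => hxj (Fin.castSucc_inj.mp h))]

section Invariance

variable [Fintype V]

/-! ### Part 3: the restriction map is constant on Kempe classes -/

/-- Core of case 3: `none` is in the swapped component and `α none = i`. -/
lemma res_invariant_case3 {m : ℕ} (α β : (addDominating J).Coloring (Fin (m + 1)))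
    (i j : Fin (m + 1)) (hij : i ≠ j) (R : Set (Option V))
    (hclosed : ∀ ⦃u v : Option V⦄, u ∈ R →
      (kempeSubgraph (addDominating J) (fun x => α x) i j).Reachable u v → v ∈ R)
    (hnoneR : none ∈ R) (hc : α none = i)
    (hβ : ∀ v, β v = swapOn (fun x => α x) i j R v) :
    KempeEquiv J m (resColoring α) (resColoring β) := by
  have hnotc : ∀ a : V, α (some a) ≠ i := by
    intro a h
    exact α.valid (adj_none_some a) (hc.trans h.symm)
  have hjR : ∀ a : V, α (some a) = j → some a ∈ R := by
    intro a h
    exact hclosed hnoneR (SimpleGraph.Adj.reachable ⟨adj_none_some a, Or.inl hc, Or.inr h⟩)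
  have hβnone : β none = j := by
    rw [hβ none, swapOn_mem hnoneR, hc, Equiv.swap_apply_left]
  have hβsome : ∀ a : V, β (some a) = if α (some a) = j then i else α (some a) := by
    intro a
    by_cases h : α (some a) = j
    · rw [if_pos h, hβ (some a), swapOn_mem (hjR a h), h, Equiv.swap_apply_right]
    · rw [if_neg h, hβ (some a)]
      by_cases hr : some a ∈ R
      · rw [swapOn_mem hr, swap_eq_self (by tauto)]
      · exact swapOn_not_mem hr
  by_cases hjlast : j = Fin.last m
  · have heq : resColoring β = resColoring α := by
      apply DFunLike.ext
      intro a
      rw [resColoring_apply β a, resColoring_apply α a]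
      apply castPred_eq_castPred
      rw [hβnone, hβsome a, hc]
      by_cases h : α (some a) = j
      · rw [if_pos h, h, hjlast, Equiv.swap_self, Equiv.swap_apply_right]
        rfl
      · rw [if_neg h, hjlast, Equiv.swap_self,
          Equiv.swap_apply_of_ne_of_ne (hnotc a) (hjlast ▸ h)]
        rfl
    rw [heq]
    exact Relation.EqvGen.refl _
  by_cases hilast : i = Fin.last m
  · have heq : resColoring β = resColoring α := by
      apply DFunLike.ext
      intro a
      rw [resColoring_apply β a, resColoring_apply α a]
      apply castPred_eq_castPred
      rw [hβnone, hβsome a, hc, hilast, Equiv.swap_self]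
      by_cases h : α (some a) = j
      · rw [if_pos h, Equiv.swap_apply_right, h]
        rfl
      · rw [if_neg h, Equiv.swap_apply_of_ne_of_ne h (hilast ▸ hnotc a)]
        rfl
    rw [heq]
    exact Relation.EqvGen.refl _
  · -- i ≠ last, j ≠ last : global swap of castPred i and castPred j
    apply kempeEquiv_swapOn (resColoring α) (resColoring β) (i.castPred hilast)
      (j.castPred hjlast) Set.univ (fun u v _ _ => Set.mem_univ v)
    intro a
    rw [swapOn_mem (Set.mem_univ a)]
    by_cases h : α (some a) = j
    · have h1 : resColoring α a = j.castPred hjlast := by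
        rw [resColoring_apply α a]
        apply castPred_eq_castPred
        rw [hc, h]
        exact Equiv.swap_apply_of_ne_of_ne (Ne.symm hij) hjlast
      have h2 : resColoring β a = i.castPred hilast := by
        rw [resColoring_apply β a]
        apply castPred_eq_castPred
        rw [hβnone, hβsome a, if_pos h]
        exact Equiv.swap_apply_of_ne_of_ne hij hilast
      rw [h1, h2, Equiv.swap_apply_right]
    · by_cases hlast : α (some a) = Fin.last m
      · have h1 : resColoring α a = i.castPred hilast := by
          rw [resColoring_apply α a]
          apply castPred_eq_castPred
          rw [hc, hlast]
          exact Equiv.swap_apply_right _ _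
        have h2 : resColoring β a = j.castPred hjlast := by
          rw [resColoring_apply β a]
          apply castPred_eq_castPred
          rw [hβnone, hβsome a, if_neg h, hlast]
          exact Equiv.swap_apply_right _ _
        rw [h1, h2, Equiv.swap_apply_left]
      · have h1 : resColoring α a = (α (some a)).castPred hlast := by
          rw [resColoring_apply α a]
          apply castPred_eq_castPred
          rw [hc]
          exact Equiv.swap_apply_of_ne_of_ne (hnotc a) hlast
        have h2 : resColoring β a = (α (some a)).castPred hlast := by
          rw [resColoring_apply β a]
          apply castPred_eq_castPred
          rw [hβnone, hβsome a, if_neg h]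
          exact Equiv.swap_apply_of_ne_of_ne h hlast
        rw [h1, h2, Equiv.swap_apply_of_ne_of_ne
          (fun hh => hnotc a (Fin.castPred_inj.mp hh))
          (fun hh => h (Fin.castPred_inj.mp hh))]

lemma res_invariant_swap {m : ℕ} (α β : (addDominating J).Coloring (Fin (m + 1)))
    (hswap : IsKempeSwap (addDominating J) α β) :
    KempeEquiv J m (resColoring α) (resColoring β) := by
  obtain ⟨i, j, w, hw⟩ := hswap
  by_cases hij : i = j
  · have heq : β = α := by
      apply DFunLike.ext
      intro v
      by_cases hr : (kempeSubgraph (addDominating J) (fun x => α x) i j).Reachable w v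
      · rw [(hw v).1 hr, hij, Equiv.swap_self]; rfl
      · exact (hw v).2 hr
    rw [heq]
    exact Relation.EqvGen.refl _
  set R : Set (Option V) :=
    {v | (kempeSubgraph (addDominating J) (fun x => α x) i j).Reachable w v} with hR
  have hclosed : ∀ ⦃u v : Option V⦄, u ∈ R →
      (kempeSubgraph (addDominating J) (fun x => α x) i j).Reachable u v → v ∈ R :=
    fun u v hu huv => hu.trans huv
  have hβ : ∀ v, β v = swapOn (fun x => α x) i j R v := by
    intro v
    by_cases hr : v ∈ R
    · rw [swapOn_mem hr]; exact (hw v).1 hr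
    · rw [swapOn_not_mem hr]; exact (hw v).2 hr
  by_cases hnR : none ∈ R
  · by_cases hcol : α none = i ∨ α none = j
    · rcases hcol with hc | hc
      · exact res_invariant_case3 α β i j hij R hclosed hnR hc hβ
      · have hgr : kempeSubgraph (addDominating J) (fun x => α x) j i
            = kempeSubgraph (addDominating J) (fun x => α x) i j := by
          ext u v
          show _ ∧ (_ ∨ _) ∧ (_ ∨ _) ↔ _ ∧ (_ ∨ _) ∧ (_ ∨ _)
          constructor <;> rintro ⟨h1, h2, h3⟩ <;> exact ⟨h1, h2.symm, h3.symm⟩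
        refine res_invariant_case3 α β j i (Ne.symm hij) R ?_ hnR hc ?_
        · intro u v hu huv
          exact hclosed hu (hgr ▸ huv)
        · intro v
          rw [hβ v]
          unfold swapOn
          rw [Equiv.swap_comm]
    · -- `none` is isolated: the component is just `{none}`, so β = α
      have hrw : (kempeSubgraph (addDominating J) (fun x => α x) i j).Reachable w none :=
        hnR
      have hwn : w = none := reach_none (fun x => α x) i j hcol hrw.symm
      have heq : β = α := by
        apply DFunLike.ext
        intro v
        rw [hβ v]
        by_cases hv : v ∈ R
        · have hrv : (kempeSubgraph (addDominating J) (fun x => α x) i j).Reachable w v :=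
            hv
          rw [hwn] at hrv
          have hvn : v = none := reach_none (fun x => α x) i j hcol hrv
          subst hvn
          rw [swapOn_mem hv, swap_eq_self hcol]
        · exact swapOn_not_mem hv
      rw [heq]
      exact Relation.EqvGen.refl _
  · by_cases hcol : α none = i ∨ α none = j
    · -- every vertex of R is uncolored, so β = α
      have huncol : ∀ v ∈ R, ¬(α v = i ∨ α v = j) := by
        intro v hv hcv
        match v with
        | none => exact hnR hv
        | some a =>
          exact hnR (hclosed hv (SimpleGraph.Adj.reachable
            ⟨(adj_none_some a).symm, hcv, hcol⟩))
      have heq : β = α := by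
        apply DFunLike.ext
        intro v
        rw [hβ v]
        by_cases hv : v ∈ R
        · rw [swapOn_mem hv, swap_eq_self (huncol v hv)]
        · exact swapOn_not_mem hv
      rw [heq]
      exact Relation.EqvGen.refl _
    · -- genuine projected swap
      have hβnone : β none = α none := by
        rw [hβ none, swapOn_not_mem hnR]
      have hci : i ≠ α none := fun h => hcol (Or.inl h.symm)
      have hcj : j ≠ α none := fun h => hcol (Or.inr h.symm)
      have key : ∀ (a : V) (x : Fin (m + 1)) (hx : x ≠ α none),
          resColoring α a
            = (Equiv.swap (α none) (Fin.last m) x).castPred (swap_ne_last hx)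
          ↔ α (some a) = x := by
        intro a x hx
        constructor
        · intro h
          have h' : (Equiv.swap (α none) (Fin.last m) (α (some a))).castPred
              (swap_ne_last (α.valid (adj_none_some a)).symm)
              = (Equiv.swap (α none) (Fin.last m) x).castPred (swap_ne_last hx) := h
          exact Equiv.injective _ (Fin.castPred_inj.mp h')
        · intro h
          rw [resColoring_apply α a]
          exact castPred_eq_castPred (by rw [h])
      have hgr : kempeSubgraph J (fun u => (resColoring α) u)
            ((Equiv.swap (α none) (Fin.last m) i).castPred (swap_ne_last hci))
            ((Equiv.swap (α none) (Fin.last m) j).castPred (swap_ne_last hcj))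
          = kempeSubgraph J (fun u => α (some u)) i j := by
        ext u v
        show J.Adj u v ∧ _ ∧ _ ↔ J.Adj u v ∧ _ ∧ _
        rw [or_congr (key u i hci) (key u j hcj), or_congr (key v i hci) (key v j hcj)]
      apply kempeEquiv_swapOn (resColoring α) (resColoring β)
        ((Equiv.swap (α none) (Fin.last m) i).castPred (swap_ne_last hci))
        ((Equiv.swap (α none) (Fin.last m) j).castPred (swap_ne_last hcj))
        {a : V | some a ∈ R}
      · intro a b ha hab
        rw [hgr] at hab
        exact hclosed ha (reach_up (fun x => α x) i j hab)
      · intro a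
        by_cases ha : some a ∈ R
        · have ha' : a ∈ {a : V | some a ∈ R} := ha
          rw [swapOn_mem ha']
          have hβa : β (some a) = Equiv.swap i j (α (some a)) := by
            rw [hβ (some a), swapOn_mem ha]
          by_cases hxi : α (some a) = i
          · have h1 : resColoring α a
                = (Equiv.swap (α none) (Fin.last m) i).castPred (swap_ne_last hci) :=
              (key a i hci).mpr hxi
            have h2 : resColoring β a
                = (Equiv.swap (α none) (Fin.last m) j).castPred (swap_ne_last hcj) := by
              rw [resColoring_apply β a]
              apply castPred_eq_castPred
              rw [hβnone, hβa, hxi, Equiv.swap_apply_left]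
            rw [h1, h2, Equiv.swap_apply_left]
          · by_cases hxj : α (some a) = j
            · have h1 : resColoring α a
                  = (Equiv.swap (α none) (Fin.last m) j).castPred (swap_ne_last hcj) :=
                (key a j hcj).mpr hxj
              have h2 : resColoring β a
                  = (Equiv.swap (α none) (Fin.last m) i).castPred (swap_ne_last hci) := by
                rw [resColoring_apply β a]
                apply castPred_eq_castPred
                rw [hβnone, hβa, hxj, Equiv.swap_apply_right]
              rw [h1, h2, Equiv.swap_apply_right]
            · have h2 : resColoring β a = resColoring α a := by
                rw [resColoring_apply β a, resColoring_apply α a]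
                apply castPred_eq_castPred
                rw [hβnone]
                apply congrArg
                rw [hβa]
                exact swap_eq_self (by tauto)
              rw [h2, Equiv.swap_apply_of_ne_of_ne
                (fun hh => hxi ((key a i hci).mp hh))
                (fun hh => hxj ((key a j hcj).mp hh))]
        · have ha' : a ∉ {a : V | some a ∈ R} := ha
          rw [swapOn_not_mem ha', resColoring_apply β a, resColoring_apply α a]
          apply castPred_eq_castPred
          rw [hβnone, hβ (some a), swapOn_not_mem ha]

lemma res_equiv {m : ℕ} {α β : (addDominating J).Coloring (Fin (m + 1))}
    (h : KempeEquiv (addDominating J) (m + 1) α β) :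
    KempeEquiv J m (resColoring α) (resColoring β) := by
  induction h with
  | rel x y hxy => exact res_invariant_swap x y hxy
  | refl x => exact Relation.EqvGen.refl _
  | symm x y _ ih => exact Relation.EqvGen.symm _ _ ih
  | trans x y z _ _ ih1 ih2 => exact Relation.EqvGen.trans _ _ _ ih1 ih2

/-! ### Part 4: extension preserves Kempe equivalence; every class has an extension -/

lemma ext_swap {m : ℕ} (φ ψ : J.Coloring (Fin m)) (h : IsKempeSwap J φ ψ) :
    KempeEquiv (addDominating J) (m + 1) (extColoring φ) (extColoring ψ) := by
  obtain ⟨i, j, w, hw⟩ := h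
  set S : Set V := {v | (kempeSubgraph J (fun x => φ x) i j).Reachable w v} with hS
  have hSclosed : ∀ ⦃u v : V⦄, u ∈ S →
      (kempeSubgraph J (fun x => φ x) i j).Reachable u v → v ∈ S :=
    fun u v hu huv => hu.trans huv
  have hψ : ∀ v, ψ v = swapOn (fun x => φ x) i j S v := by
    intro v
    by_cases hr : v ∈ S
    · rw [swapOn_mem hr]; exact (hw v).1 hr
    · rw [swapOn_not_mem hr]; exact (hw v).2 hr
  have hnone : ¬((extColoring φ) none = i.castSucc ∨ (extColoring φ) none = j.castSucc) := by
    rintro (h | h)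
    · exact (Fin.castSucc_lt_last i).ne' h
    · exact (Fin.castSucc_lt_last j).ne' h
  have hcc : ∀ w : V, ((extColoring φ) (some w) = i.castSucc
      ∨ (extColoring φ) (some w) = j.castSucc) ↔ (φ w = i ∨ φ w = j) := by
    intro w
    show ((φ w).castSucc = i.castSucc ∨ (φ w).castSucc = j.castSucc) ↔ _
    rw [Fin.castSucc_inj, Fin.castSucc_inj]
  have hgr : kempeSubgraph J (fun u => (extColoring φ) (some u)) i.castSucc j.castSucc
      = kempeSubgraph J (fun x => φ x) i j := by
    ext u v
    show J.Adj u v ∧ ((extColoring φ) (some u) = i.castSucc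
        ∨ (extColoring φ) (some u) = j.castSucc)
      ∧ ((extColoring φ) (some v) = i.castSucc ∨ (extColoring φ) (some v) = j.castSucc)
      ↔ J.Adj u v ∧ (φ u = i ∨ φ u = j) ∧ (φ v = i ∨ φ v = j)
    rw [hcc u, hcc v]
  apply kempeEquiv_swapOn (extColoring φ) (extColoring ψ) i.castSucc j.castSucc
    (some '' S)
  · rintro u x ⟨a, ha, rfl⟩ hux
    obtain ⟨b, rfl, hab⟩ := reach_down (fun x => extColoring φ x) _ _ hnone hux
    rw [hgr] at hab
    exact ⟨b, hSclosed ha hab, rfl⟩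
  · intro v
    match v with
    | none =>
      rw [swapOn_not_mem (by rintro ⟨a, -, h⟩; cases h)]
      rfl
    | some a =>
      by_cases ha : a ∈ S
      · rw [swapOn_mem (Set.mem_image_of_mem some ha)]
        show (ψ a).castSucc = Equiv.swap i.castSucc j.castSucc ((φ a).castSucc)
        rw [hψ a, swapOn_mem ha, swap_castSucc]
      · rw [swapOn_not_mem (fun hh => ha (by
          obtain ⟨b, hb, hba⟩ := hh
          rwa [Option.some_inj.mp hba] at hb))]
        show (ψ a).castSucc = (φ a).castSucc
        rw [hψ a, swapOn_not_mem ha]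

lemma ext_equiv {m : ℕ} {φ ψ : J.Coloring (Fin m)} (h : KempeEquiv J m φ ψ) :
    KempeEquiv (addDominating J) (m + 1) (extColoring φ) (extColoring ψ) := by
  induction h with
  | rel x y hxy => exact ext_swap x y hxy
  | refl x => exact Relation.EqvGen.refl _
  | symm x y _ ih => exact Relation.EqvGen.symm _ _ ih
  | trans x y z _ _ ih1 ih2 => exact Relation.EqvGen.trans _ _ _ ih1 ih2

lemma exists_ext {m : ℕ} (α : (addDominating J).Coloring (Fin (m + 1))) :
    ∃ φ : J.Coloring (Fin m),
      KempeEquiv (addDominating J) (m + 1) α (extColoring φ) := by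
  set c := α none with hcdef
  set S : Set (Option V) :=
    {v | (kempeSubgraph (addDominating J) (fun x => α x) c (Fin.last m)).Reachable none v}
    with hS
  have hclosed : ∀ ⦃u v : Option V⦄, u ∈ S →
      (kempeSubgraph (addDominating J) (fun x => α x) c (Fin.last m)).Reachable u v →
      v ∈ S := fun u v hu huv => hu.trans huv
  let β : (addDominating J).Coloring (Fin (m + 1)) :=
    Coloring.mk (swapOn (fun x => α x) c (Fin.last m) S)
      (swapOn_proper α c (Fin.last m) S hclosed)
  have hβ : ∀ v, β v = swapOn (fun x => α x) c (Fin.last m) S v := fun v => rfl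
  have hnS : none ∈ S := SimpleGraph.Reachable.refl none
  have hβnone : β none = Fin.last m := by
    rw [hβ none, swapOn_mem hnS, ← hcdef, Equiv.swap_apply_left]
  have hβsome : ∀ a : V, β (some a) ≠ Fin.last m := fun a h =>
    β.valid (adj_none_some a) (hβnone.trans h.symm)
  let φ : J.Coloring (Fin m) :=
    Coloring.mk (fun a => (β (some a)).castPred (hβsome a))
      (fun {a b} hab h =>
        β.valid (adj_some_some.mpr hab) (Fin.castPred_inj.mp h))
  refine ⟨φ, ?_⟩
  have hext : extColoring φ = β := by
    apply DFunLike.ext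
    rintro (_ | a)
    · exact hβnone.symm
    · show ((β (some a)).castPred (hβsome a)).castSucc = β (some a)
      exact Fin.castSucc_castPred _ _
  rw [hext]
  exact kempeEquiv_swapOn α β c (Fin.last m) S hclosed hβ

/-! ### Part 5: the bijection between Kempe classes -/

noncomputable def quotEquiv (m : ℕ) :
    Quot (KempeEquiv J m) ≃ Quot (KempeEquiv (addDominating J) (m + 1)) where
  toFun := Quot.map extColoring (fun _ _ h => ext_equiv h)
  invFun := Quot.map resColoring (fun _ _ h => res_equiv h)
  left_inv := fun q => Quot.inductionOn q (fun φ => by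
    show Quot.mk _ (resColoring (extColoring φ)) = Quot.mk _ φ
    rw [res_ext])
  right_inv := fun q => Quot.inductionOn q (fun α => by
    show Quot.mk _ (extColoring (resColoring α)) = Quot.mk _ α
    obtain ⟨φ, hφ⟩ := exists_ext α
    have h1 : KempeEquiv J m (resColoring α) φ := by
      have h2 := res_equiv hφ
      rwa [res_ext] at h2
    exact Quot.sound (Relation.EqvGen.trans _ _ _ (ext_equiv h1)
      (Relation.EqvGen.symm _ _ hφ)))

lemma kc_eq (m : ℕ) : Kc J m = Kc (addDominating J) (m + 1) :=
  Nat.card_congr (quotEquiv m)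

end Invariance

end KempeWork

/-- `Kc(J, χ(J)+1) = 1` iff `Kc(J', χ(J')+1) = 1`, where `J'` is obtained from `J`
by adding a dominating vertex. -/
theorem stmt12 {V : Type*} [Fintype V] (J : SimpleGraph V) (n n' : ℕ)
    (hn : J.chromaticNumber = n) (hn' : (addDominating J).chromaticNumber = n') :
    Kc J (n + 1) = 1 ↔ Kc (addDominating J) (n' + 1) = 1 := by
  have hcol : J.Colorable n := chromaticNumber_le_iff_colorable.mp (le_of_eq hn)
  have h1 : (addDominating J).Colorable (n + 1) := by
    obtain ⟨φ⟩ := hcol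
    exact ⟨KempeWork.extColoring φ⟩
  have h2 : (addDominating J).Colorable n' :=
    chromaticNumber_le_iff_colorable.mp (le_of_eq hn')
  have hn'pos : n' ≠ 0 := by
    intro h
    subst h
    obtain ⟨α⟩ := h2
    exact (α none).elim0
  obtain ⟨m, rfl⟩ : ∃ m, n' = m + 1 :=
    ⟨n' - 1, (Nat.succ_pred_eq_of_pos (Nat.pos_of_ne_zero hn'pos)).symm⟩
  have h3 : J.Colorable m := by
    obtain ⟨α⟩ := h2
    exact ⟨KempeWork.resColoring α⟩
  have hle1 : m + 1 ≤ n + 1 := by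
    have h4 := chromaticNumber_le_iff_colorable.mpr h1
    rw [hn'] at h4
    exact_mod_cast h4
  have hle2 : n ≤ m := by
    have h4 := chromaticNumber_le_iff_colorable.mpr h3
    rw [hn] at h4
    exact_mod_cast h4
  have hm : m = n := le_antisymm (by omega) hle2
  subst hm
  rw [KempeWork.kc_eq (m + 1)]
end

section
/- Let G be a graph, let S be an independent set of vertices of G, and suppose some vertex v ∈ S is adjacent to every vertex of G outside S. If Kc(G − S, χ(G)) = 1, then Kc(G, χ(G) + 1) = 1, where G − S denotes the graph obtained from G by deleting the vertices of S and χ(G) denotes the chromatic number of G. -/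
open SimpleGraph

namespace Stmt17Aux

variable {V : Type*}

lemma eq_of_reach_of_isolated {K : SimpleGraph V} {w x : V} (h : ∀ y, ¬ K.Adj w y)
    (r : K.Reachable w x) : x = w := by
  obtain ⟨p⟩ := r
  cases p with
  | nil => rfl
  | cons a _ => exact absurd a (h _)

lemma swap_mem_pair {k : ℕ} {i j a : Fin k} :
    Equiv.swap i j a = i ∨ Equiv.swap i j a = j ↔ a = i ∨ a = j := by
  rcases eq_or_ne a i with rfl | hi
  · simp
  rcases eq_or_ne a j with rfl | hj
  · simp
  rw [Equiv.swap_apply_of_ne_of_ne hi hj]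

lemma castSucc_swap {n : ℕ} (i j a : Fin n) :
    Equiv.swap i.castSucc j.castSucc a.castSucc = (Equiv.swap i j a).castSucc := by
  rcases eq_or_ne a i with rfl | hi
  · simp
  rcases eq_or_ne a j with rfl | hj
  · simp
  rw [Equiv.swap_apply_of_ne_of_ne (fun h => hi (Fin.castSucc_injective _ h))
      (fun h => hj (Fin.castSucc_injective _ h)),
    Equiv.swap_apply_of_ne_of_ne hi hj]

lemma kempe_congr (G : SimpleGraph V) {k : ℕ} {f g : V → Fin k} {i j : Fin k}
    (h : ∀ x, (f x = i ∨ f x = j) ↔ (g x = i ∨ g x = j)) :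
    kempeSubgraph G f i j = kempeSubgraph G g i j := by
  ext a b
  show G.Adj a b ∧ _ ↔ G.Adj a b ∧ _
  exact and_congr_right fun _ => and_congr (h a) (h b)

open Classical in
noncomputable def pSwapFun {k : ℕ} (f : V → Fin k) (i j : Fin k) (A : Set V) : V → Fin k :=
  fun x => if x ∈ A then Equiv.swap i j (f x) else f x

/-- `A` is closed under reachability in the Kempe subgraph. -/
def KClosed (G : SimpleGraph V) {k : ℕ} (f : V → Fin k) (i j : Fin k) (A : Set V) : Prop :=
  ∀ x ∈ A, ∀ y, (kempeSubgraph G f i j).Reachable x y → y ∈ A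

lemma pSwapFun_pos {k : ℕ} {f : V → Fin k} {i j : Fin k} {A : Set V} {x : V} (hx : x ∈ A) :
    pSwapFun f i j A x = Equiv.swap i j (f x) := by
  unfold pSwapFun
  rw [if_pos hx]

lemma pSwapFun_neg {k : ℕ} {f : V → Fin k} {i j : Fin k} {A : Set V} {x : V} (hx : x ∉ A) :
    pSwapFun f i j A x = f x := by
  unfold pSwapFun
  rw [if_neg hx]

lemma pSwapFun_mem_iff {k : ℕ} (f : V → Fin k) (i j : Fin k) (A : Set V) (x : V) :
    (pSwapFun f i j A x = i ∨ pSwapFun f i j A x = j) ↔ (f x = i ∨ f x = j) := by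
  by_cases hx : x ∈ A
  · rw [pSwapFun_pos hx]
    exact swap_mem_pair
  · rw [pSwapFun_neg hx]

noncomputable def pSwap (G : SimpleGraph V) {k : ℕ} (φ : G.Coloring (Fin k)) (i j : Fin k)
    (A : Set V) (hA : KClosed G (fun x => φ x) i j A) : G.Coloring (Fin k) :=
  Coloring.mk (pSwapFun (DFunLike.coe φ) i j A) (by
    intro a b hab
    have hne : φ a ≠ φ b := φ.valid hab
    by_cases ha : a ∈ A <;> by_cases hb : b ∈ A
    · rw [pSwapFun_pos ha, pSwapFun_pos hb]
      exact fun h => hne ((Equiv.swap i j).injective h)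
    · rw [pSwapFun_pos ha, pSwapFun_neg hb]
      intro h
      by_cases hm : φ a = i ∨ φ a = j
      · have h' : Equiv.swap i j (φ a) = φ b := h
        have hbm : φ b = i ∨ φ b = j := h' ▸ swap_mem_pair.mpr hm
        exact hb (hA a ha b (SimpleGraph.Adj.reachable ⟨hab, hm, hbm⟩))
      · push_neg at hm
        rw [Equiv.swap_apply_of_ne_of_ne hm.1 hm.2] at h
        exact hne h
    · rw [pSwapFun_neg ha, pSwapFun_pos hb]
      intro h
      by_cases hm : φ b = i ∨ φ b = j
      · have h' : φ a = Equiv.swap i j (φ b) := h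
        have ham : φ a = i ∨ φ a = j := by rw [h']; exact swap_mem_pair.mpr hm
        exact ha (hA b hb a (SimpleGraph.Adj.reachable ⟨hab.symm, hm, ham⟩))
      · push_neg at hm
        rw [Equiv.swap_apply_of_ne_of_ne hm.1 hm.2] at h
        exact hne h
    · rw [pSwapFun_neg ha, pSwapFun_neg hb]; exact hne)

lemma kClosed_univ (G : SimpleGraph V) {k : ℕ} (f : V → Fin k) (i j : Fin k) :
    KClosed G f i j Set.univ := fun _ _ y _ => Set.mem_univ y

open Classical in
noncomputable def badSet [Fintype V] {k : ℕ} (f : V → Fin k) (i j : Fin k) (A : Set V) :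
    Finset V :=
  Finset.univ.filter fun x => x ∉ A ∧ (f x = i ∨ f x = j)

open Classical in
lemma mem_badSet [Fintype V] {k : ℕ} {f : V → Fin k} {i j : Fin k} {A : Set V} {x : V} :
    x ∈ badSet f i j A ↔ x ∉ A ∧ (f x = i ∨ f x = j) := by
  unfold badSet
  rw [Finset.mem_filter]
  exact ⟨fun h => h.2, fun h => ⟨Finset.mem_univ x, h⟩⟩

open Classical in
lemma pSwap_equiv_univ [Fintype V] (G : SimpleGraph V) {k : ℕ} (φ : G.Coloring (Fin k))
    (i j : Fin k) :
    ∀ (m : ℕ) (A : Set V) (hA : KClosed G (fun x => φ x) i j A),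
      (badSet (DFunLike.coe φ) i j A).card ≤ m →
      KempeEquiv G k (pSwap G φ i j A hA)
        (pSwap G φ i j Set.univ (kClosed_univ G _ i j)) := by
  intro m
  induction m with
  | zero =>
    intro A hA hcard
    have hf : ∀ x, ¬(x ∉ A ∧ (φ x = i ∨ φ x = j)) := by
      intro x hx
      have hmem : x ∈ badSet (DFunLike.coe φ) i j A := mem_badSet.mpr hx
      have := Finset.card_pos.mpr ⟨x, hmem⟩
      omega
    have heq : pSwap G φ i j A hA = pSwap G φ i j Set.univ (kClosed_univ G _ i j) := by
      apply DFunLike.ext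
      intro x
      show pSwapFun _ i j A x = pSwapFun _ i j Set.univ x
      rw [pSwapFun_pos (Set.mem_univ x)]
      by_cases hx : x ∈ A
      · rw [pSwapFun_pos hx]
      · rw [pSwapFun_neg hx]
        have hm : ¬(φ x = i ∨ φ x = j) := fun hm => hf x ⟨hx, hm⟩
        push_neg at hm
        rw [Equiv.swap_apply_of_ne_of_ne hm.1 hm.2]
    rw [heq]
    exact Relation.EqvGen.refl _
  | succ m ih =>
    intro A hA hcard
    by_cases hemp : badSet (DFunLike.coe φ) i j A = ∅
    · exact ih A hA (by rw [hemp]; simp)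
    · obtain ⟨w, hw⟩ := Finset.nonempty_iff_ne_empty.mpr hemp
      obtain ⟨hwA, hwc⟩ := mem_badSet.mp hw
      set K := kempeSubgraph G (fun x => φ x) i j with hK
      have hA' : KClosed G (fun x => φ x) i j (A ∪ {y | K.Reachable w y}) := by
        rintro x (hx | hx) y hr
        · exact Or.inl (hA x hx y hr)
        · exact Or.inr (Reachable.trans hx hr)
      have hreach_notA : ∀ x, K.Reachable w x → x ∉ A := by
        intro x hr hx
        exact hwA (hA x hx w hr.symm)
      have hnotA' : ∀ x, x ∉ A → ¬ K.Reachable w x → x ∉ A ∪ {y | K.Reachable w y} := by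
        rintro x hx hr (hh | hh)
        · exact hx hh
        · exact hr hh
      have hswap : IsKempeSwap G (pSwap G φ i j A hA)
          (pSwap G φ i j (A ∪ {y | K.Reachable w y}) hA') := by
        refine ⟨i, j, w, fun x => ?_⟩
        have hKeq : kempeSubgraph G (fun y => (pSwap G φ i j A hA) y) i j = K :=
          kempe_congr G (fun y => pSwapFun_mem_iff (DFunLike.coe φ) i j A y)
        constructor
        · intro hr
          rw [hKeq] at hr
          have hxA : x ∉ A := hreach_notA x hr
          show pSwapFun _ i j (A ∪ {y | K.Reachable w y}) x
              = Equiv.swap i j (pSwapFun _ i j A x)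
          rw [pSwapFun_pos (A := A ∪ {y | K.Reachable w y}) (Or.inr hr), pSwapFun_neg hxA]
        · intro hr
          rw [hKeq] at hr
          show pSwapFun _ i j (A ∪ {y | K.Reachable w y}) x = pSwapFun _ i j A x
          by_cases hx : x ∈ A
          · rw [pSwapFun_pos hx,
              pSwapFun_pos (A := A ∪ {y | K.Reachable w y}) (Or.inl hx)]
          · rw [pSwapFun_neg hx, pSwapFun_neg (hnotA' x hx hr)]
      have hwmem : w ∈ badSet (DFunLike.coe φ) i j A := mem_badSet.mpr ⟨hwA, hwc⟩
      have hsubset : badSet (DFunLike.coe φ) i j (A ∪ {y | K.Reachable w y}) ⊆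
          (badSet (DFunLike.coe φ) i j A).erase w := by
        intro x hx
        obtain ⟨hxA', hxc⟩ := mem_badSet.mp hx
        have hxA : x ∉ A := fun hh => hxA' (Or.inl hh)
        have hxr : ¬ K.Reachable w x := fun hh => hxA' (Or.inr hh)
        have hxw : x ≠ w := by
          rintro rfl
          exact hxr (Reachable.refl x)
        exact Finset.mem_erase.mpr ⟨hxw, mem_badSet.mpr ⟨hxA, hxc⟩⟩
      have hcard' : (badSet (DFunLike.coe φ) i j (A ∪ {y | K.Reachable w y})).card ≤ m := by
        have h1 := Finset.card_le_card hsubset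
        rw [Finset.card_erase_of_mem hwmem] at h1
        have h2 := Finset.card_pos.mpr ⟨w, hwmem⟩
        omega
      exact Relation.EqvGen.trans _ _ _ (Relation.EqvGen.rel _ _ hswap) (ih _ hA' hcard')

lemma kempeEquiv_full_swap [Fintype V] (G : SimpleGraph V) {k : ℕ}
    (φ : G.Coloring (Fin k)) (i j : Fin k) :
    ∃ ψ : G.Coloring (Fin k), KempeEquiv G k φ ψ ∧ ∀ x, ψ x = Equiv.swap i j (φ x) := by
  classical
  have h0 : KClosed G (fun x => φ x) i j ∅ :=
    fun x hx => absurd hx (Set.notMem_empty x)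
  have h1 := pSwap_equiv_univ G φ i j _ ∅ h0 le_rfl
  have h2 : pSwap G φ i j ∅ h0 = φ := by
    apply DFunLike.ext
    intro x
    show pSwapFun _ i j ∅ x = φ x
    rw [pSwapFun_neg (Set.notMem_empty x)]
  refine ⟨pSwap G φ i j Set.univ (kClosed_univ G _ i j), ?_, fun x => ?_⟩
  · rw [h2] at h1; exact h1
  · show pSwapFun _ i j Set.univ x = _
    rw [pSwapFun_pos (Set.mem_univ x)]

open Classical in
lemma toMono [Fintype V] (G : SimpleGraph V) (S : Set V)
    (hS : ∀ a ∈ S, ∀ b ∈ S, ¬ G.Adj a b)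
    (v : V) (hv : v ∈ S) (hdom : ∀ w : V, w ∉ S → G.Adj v w) {k : ℕ} :
    ∀ (m : ℕ) (φ : G.Coloring (Fin k)),
      (Finset.univ.filter fun u => u ∈ S ∧ φ u ≠ φ v).card ≤ m →
      ∃ ψ : G.Coloring (Fin k), KempeEquiv G k φ ψ ∧ ψ v = φ v ∧ ∀ u ∈ S, ψ u = φ v := by
  intro m
  induction m with
  | zero =>
    intro φ hcard
    refine ⟨φ, Relation.EqvGen.refl _, rfl, fun u hu => ?_⟩
    by_contra hne
    have hmem : u ∈ Finset.univ.filter fun u => u ∈ S ∧ φ u ≠ φ v :=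
      Finset.mem_filter.mpr ⟨Finset.mem_univ u, hu, hne⟩
    have := Finset.card_pos.mpr ⟨u, hmem⟩
    omega
  | succ m ih =>
    intro φ hcard
    by_cases hemp : (Finset.univ.filter fun u => u ∈ S ∧ φ u ≠ φ v) = ∅
    · refine ⟨φ, Relation.EqvGen.refl _, rfl, fun u hu => ?_⟩
      by_contra hne
      have hmem : u ∈ Finset.univ.filter fun u => u ∈ S ∧ φ u ≠ φ v :=
        Finset.mem_filter.mpr ⟨Finset.mem_univ u, hu, hne⟩
      rw [hemp] at hmem
      exact absurd hmem (Finset.notMem_empty u)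
    · obtain ⟨u, hu⟩ := Finset.nonempty_iff_ne_empty.mpr hemp
      rw [Finset.mem_filter] at hu
      obtain ⟨-, huS, hucol⟩ := hu
      have huv : u ≠ v := fun hh => hucol (by rw [hh])
      have hnb : ∀ y, G.Adj u y → (φ y ≠ φ u ∧ φ y ≠ φ v) := by
        intro y hy
        have hyS : y ∉ S := fun hh => hS u huS y hh hy
        exact ⟨(φ.valid hy).symm, (φ.valid (hdom y hyS)).symm⟩
      have hvalid : ∀ a b : V, G.Adj a b →
          (if a = u then φ v else φ a) ≠ (if b = u then φ v else φ b) := by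
        intro a b hab
        by_cases ha : a = u <;> by_cases hb : b = u
        · exfalso; rw [ha, hb] at hab; exact G.irrefl hab
        · subst ha
          rw [if_pos rfl, if_neg hb]
          exact (hnb b hab).2.symm
        · subst hb
          rw [if_neg ha, if_pos rfl]
          exact (hnb a hab.symm).2
        · rw [if_neg ha, if_neg hb]
          exact φ.valid hab
      set φ' : G.Coloring (Fin k) :=
        Coloring.mk (fun x => if x = u then φ v else φ x)
          (fun {a b} hab => hvalid a b hab) with hφ'
      have hφ'app : ∀ x, φ' x = if x = u then φ v else φ x := fun x => rfl
      have hiso : ∀ y, ¬ (kempeSubgraph G (fun x => φ x) (φ u) (φ v)).Adj u y := by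
        rintro y ⟨hadj, -, (h1 | h2)⟩
        · exact (hnb y hadj).1 h1
        · exact (hnb y hadj).2 h2
      have hstep : IsKempeSwap G φ φ' := by
        refine ⟨φ u, φ v, u, fun x => ?_⟩
        constructor
        · intro hr
          have hx : x = u := eq_of_reach_of_isolated hiso hr
          subst hx
          rw [hφ'app, if_pos rfl, Equiv.swap_apply_left]
        · intro hr
          have hx : x ≠ u := by
            rintro rfl
            exact hr (Reachable.refl x)
          rw [hφ'app, if_neg hx]
      have hφ'v : φ' v = φ v := by rw [hφ'app, if_neg (Ne.symm huv)]
      have hφ'u : φ' u = φ v := by rw [hφ'app, if_pos rfl]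
      have hsubset : (Finset.univ.filter fun x => x ∈ S ∧ φ' x ≠ φ' v) ⊆
          (Finset.univ.filter fun x => x ∈ S ∧ φ x ≠ φ v).erase u := by
        intro x hx
        rw [Finset.mem_filter] at hx
        obtain ⟨-, hxS, hxne⟩ := hx
        have hxu : x ≠ u := by
          rintro rfl
          exact hxne (by rw [hφ'u, hφ'v])
        refine Finset.mem_erase.mpr ⟨hxu, Finset.mem_filter.mpr ⟨Finset.mem_univ x, hxS, ?_⟩⟩
        rw [hφ'app, if_neg hxu, hφ'v] at hxne
        exact hxne
      have humem : u ∈ Finset.univ.filter fun x => x ∈ S ∧ φ x ≠ φ v :=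
        Finset.mem_filter.mpr ⟨Finset.mem_univ u, huS, hucol⟩
      have hcard' : (Finset.univ.filter fun x => x ∈ S ∧ φ' x ≠ φ' v).card ≤ m := by
        have h1 := Finset.card_le_card hsubset
        rw [Finset.card_erase_of_mem humem] at h1
        have h2 := Finset.card_pos.mpr ⟨u, humem⟩
        omega
      obtain ⟨ψ, hψ, hψv, hψS⟩ := ih φ' hcard'
      refine ⟨ψ, Relation.EqvGen.trans _ _ _ (Relation.EqvGen.rel _ _ hstep) hψ, ?_, ?_⟩
      · rw [hψv, hφ'v]
      · intro u' hu'
        rw [hψS u' hu', hφ'v]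

open Classical in
noncomputable def liftFun (S : Set V) {n : ℕ} (f : ↥Sᶜ → Fin n) : V → Fin (n + 1) :=
  fun x => if h : x ∈ S then Fin.last n else (f ⟨x, h⟩).castSucc

lemma liftFun_notS (S : Set V) {n : ℕ} (f : ↥Sᶜ → Fin n) (x : ↥Sᶜ) :
    liftFun S f ↑x = (f x).castSucc := by
  unfold liftFun
  rw [dif_neg x.2]

lemma liftFun_color_notS (S : Set V) {n : ℕ} (f : ↥Sᶜ → Fin n) {i j : Fin n} {x : V}
    (hx : liftFun S f x = i.castSucc ∨ liftFun S f x = j.castSucc) : x ∉ S := by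
  intro hxS
  unfold liftFun at hx
  rw [dif_pos hxS] at hx
  rcases hx with hh | hh <;> exact (Fin.castSucc_lt_last _).ne' hh

noncomputable def liftCol (G : SimpleGraph V) (S : Set V)
    (hS : ∀ a ∈ S, ∀ b ∈ S, ¬ G.Adj a b) {n : ℕ}
    (θ : (G.induce Sᶜ).Coloring (Fin n)) : G.Coloring (Fin (n + 1)) :=
  Coloring.mk (liftFun S (fun x => θ x)) (by
    intro a b hab
    unfold liftFun
    by_cases ha : a ∈ S <;> by_cases hb : b ∈ S
    · exact absurd hab (hS a ha b hb)
    · rw [dif_pos ha, dif_neg hb]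
      exact (Fin.castSucc_lt_last _).ne'
    · rw [dif_neg ha, dif_pos hb]
      exact (Fin.castSucc_lt_last _).ne
    · rw [dif_neg ha, dif_neg hb]
      intro hEq
      have h1 := Fin.castSucc_injective _ hEq
      have hadj : (G.induce Sᶜ).Adj ⟨a, ha⟩ ⟨b, hb⟩ := hab
      exact θ.valid hadj h1)

lemma up_reach_iff (G : SimpleGraph V) (S : Set V) {n : ℕ} (f : ↥Sᶜ → Fin n)
    (i j : Fin n) (w x : ↥Sᶜ) :
    (kempeSubgraph G (liftFun S f) i.castSucc j.castSucc).Reachable ↑w ↑x ↔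
      (kempeSubgraph (G.induce Sᶜ) (fun y => f y) i j).Reachable w x := by
  have up_of_dn : ∀ {a b : ↥Sᶜ}, (kempeSubgraph (G.induce Sᶜ) (fun y => f y) i j).Adj a b →
      (kempeSubgraph G (liftFun S f) i.castSucc j.castSucc).Adj ↑a ↑b := by
    rintro a b ⟨hadj, hca, hcb⟩
    refine ⟨hadj, ?_, ?_⟩
    · rw [liftFun_notS]
      rcases hca with hh | hh
      · exact Or.inl (congrArg Fin.castSucc hh)
      · exact Or.inr (congrArg Fin.castSucc hh)
    · rw [liftFun_notS]
      rcases hcb with hh | hh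
      · exact Or.inl (congrArg Fin.castSucc hh)
      · exact Or.inr (congrArg Fin.castSucc hh)
  have dn_of_up : ∀ {a b : ↥Sᶜ}, (kempeSubgraph G (liftFun S f) i.castSucc j.castSucc).Adj ↑a ↑b →
      (kempeSubgraph (G.induce Sᶜ) (fun y => f y) i j).Adj a b := by
    rintro a b ⟨hadj, hca, hcb⟩
    rw [liftFun_notS] at hca hcb
    refine ⟨hadj, ?_, ?_⟩
    · rcases hca with hh | hh
      · exact Or.inl (Fin.castSucc_injective _ hh)
      · exact Or.inr (Fin.castSucc_injective _ hh)
    · rcases hcb with hh | hh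
      · exact Or.inl (Fin.castSucc_injective _ hh)
      · exact Or.inr (Fin.castSucc_injective _ hh)
  constructor
  · intro hr
    obtain ⟨p⟩ := hr
    have H : ∀ (a b : V) (p : (kempeSubgraph G (liftFun S f) i.castSucc j.castSucc).Walk a b),
        ∀ (ha : a ∈ Sᶜ) (hb : b ∈ Sᶜ),
        (kempeSubgraph (G.induce Sᶜ) (fun y => f y) i j).Reachable ⟨a, ha⟩ ⟨b, hb⟩ := by
      intro a b p
      induction p with
      | nil =>
        intro ha hb
        exact Reachable.refl _
      | @cons a' c' b' hadj q ihq =>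
        intro ha hb
        have hcS : c' ∉ S := liftFun_color_notS S f hadj.2.2
        have h1 : (kempeSubgraph (G.induce Sᶜ) (fun y => f y) i j).Adj ⟨a', ha⟩ ⟨c', hcS⟩ :=
          dn_of_up hadj
        exact h1.reachable.trans (ihq hcS hb)
    exact H ↑w ↑x p w.2 x.2
  · intro hr
    obtain ⟨p⟩ := hr
    induction p with
    | nil => exact Reachable.refl _
    | cons hadj q ihq => exact (up_of_dn hadj).reachable.trans ihq

lemma lift_swap (G : SimpleGraph V) (S : Set V)
    (hS : ∀ a ∈ S, ∀ b ∈ S, ¬ G.Adj a b) {n : ℕ}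
    {θ θ' : (G.induce Sᶜ).Coloring (Fin n)}
    (h : IsKempeSwap (G.induce Sᶜ) θ θ') :
    IsKempeSwap G (liftCol G S hS θ) (liftCol G S hS θ') := by
  obtain ⟨i, j, w, hw⟩ := h
  refine ⟨i.castSucc, j.castSucc, ↑w, fun x => ?_⟩
  by_cases hx : x ∈ S
  · have hiso : ∀ y, ¬ (kempeSubgraph G (liftFun S (fun y => θ y))
        i.castSucc j.castSucc).Adj x y := by
      rintro y ⟨-, hcx, -⟩
      exact (liftFun_color_notS S _ hcx) hx
    constructor
    · intro hr
      exfalso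
      have hwx : (↑w : V) = x := eq_of_reach_of_isolated hiso hr.symm
      exact w.2 (hwx ▸ hx)
    · intro _
      show liftFun S _ x = liftFun S _ x
      unfold liftFun
      rw [dif_pos hx, dif_pos hx]
  · have hxc : x ∈ Sᶜ := hx
    have hre := up_reach_iff G S (fun y => θ y) i j w ⟨x, hxc⟩
    constructor
    · intro hr
      have h1 := (hw ⟨x, hxc⟩).1 (hre.mp hr)
      show liftFun S (fun y => θ' y) x
          = Equiv.swap i.castSucc j.castSucc (liftFun S (fun y => θ y) x)
      unfold liftFun
      rw [dif_neg hx, dif_neg hx, castSucc_swap]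
      exact congrArg Fin.castSucc h1
    · intro hr
      have h1 := (hw ⟨x, hxc⟩).2 (fun hc => hr (hre.mpr hc))
      show liftFun S (fun y => θ' y) x = liftFun S (fun y => θ y) x
      unfold liftFun
      rw [dif_neg hx, dif_neg hx]
      exact congrArg Fin.castSucc h1

lemma lift_equiv (G : SimpleGraph V) (S : Set V)
    (hS : ∀ a ∈ S, ∀ b ∈ S, ¬ G.Adj a b) {n : ℕ}
    {θ θ' : (G.induce Sᶜ).Coloring (Fin n)}
    (h : KempeEquiv (G.induce Sᶜ) n θ θ') :
    KempeEquiv G (n + 1) (liftCol G S hS θ) (liftCol G S hS θ') := by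
  induction h with
  | rel a b hab => exact Relation.EqvGen.rel _ _ (lift_swap G S hS hab)
  | refl a => exact Relation.EqvGen.refl _
  | symm a b _ ihab => exact Relation.EqvGen.symm _ _ ihab
  | trans a b c _ _ ih1 ih2 => exact Relation.EqvGen.trans _ _ _ ih1 ih2

noncomputable def restrCol (G : SimpleGraph V) (S : Set V) {n : ℕ}
    (v : V) (hv : v ∈ S) (hdom : ∀ w : V, w ∉ S → G.Adj v w)
    (φ : G.Coloring (Fin (n + 1))) (hmono : ∀ u ∈ S, φ u = Fin.last n) :
    (G.induce Sᶜ).Coloring (Fin n) :=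
  Coloring.mk (fun x => (φ ↑x).castPred (by
      have hxS : (↑x : V) ∉ S := x.2
      have h1 := φ.valid (hdom ↑x hxS)
      rw [hmono v hv] at h1
      exact h1.symm))
    (by
      intro a b hab
      intro hEq
      have h1 := congrArg Fin.castSucc hEq
      rw [Fin.castSucc_castPred, Fin.castSucc_castPred] at h1
      exact φ.valid (hab : G.Adj ↑a ↑b) h1)

lemma lift_restr (G : SimpleGraph V) (S : Set V)
    (hS : ∀ a ∈ S, ∀ b ∈ S, ¬ G.Adj a b) {n : ℕ}
    (v : V) (hv : v ∈ S) (hdom : ∀ w : V, w ∉ S → G.Adj v w)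
    (φ : G.Coloring (Fin (n + 1))) (hmono : ∀ u ∈ S, φ u = Fin.last n) :
    liftCol G S hS (restrCol G S v hv hdom φ hmono) = φ := by
  apply DFunLike.ext
  intro x
  show liftFun S _ x = φ x
  unfold liftFun
  by_cases hx : x ∈ S
  · rw [dif_pos hx]
    exact (hmono x hx).symm
  · rw [dif_neg hx]
    have hne : φ x ≠ Fin.last n := by
      have h1 := φ.valid (hdom x hx)
      rw [hmono v hv] at h1
      exact h1.symm
    exact Fin.castSucc_castPred _ hne

end Stmt17Aux

/-- If `S` is an independent set of `G` containing a vertex `v` adjacent to every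
vertex outside `S`, and `Kc(G - S, χ(G)) = 1`, then `Kc(G, χ(G)+1) = 1`. -/
theorem stmt17 {V : Type*} [Fintype V] (G : SimpleGraph V) (S : Set V)
    (hS : ∀ a ∈ S, ∀ b ∈ S, ¬ G.Adj a b)
    (v : V) (hv : v ∈ S) (hdom : ∀ w : V, w ∉ S → G.Adj v w)
    (n : ℕ) (hchi : G.chromaticNumber = n)
    (h : Kc (G.induce Sᶜ) n = 1) :
    Kc G (n + 1) = 1 := by
  classical
  rw [Kc, Nat.card_eq_one_iff_unique] at h
  obtain ⟨hsub, hnonempty⟩ := h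
  obtain ⟨q⟩ := hnonempty
  obtain ⟨θ0, -⟩ := Quot.exists_rep q
  rw [Kc, Nat.card_eq_one_iff_unique]
  have key : ∀ φ : G.Coloring (Fin (n + 1)),
      ∃ φ', KempeEquiv G (n + 1) φ φ' ∧ ∀ u ∈ S, φ' u = Fin.last n := by
    intro φ
    obtain ⟨ψ₁, h1, h1v, h1S⟩ := Stmt17Aux.toMono G S hS v hv hdom _ φ le_rfl
    obtain ⟨ψ₂, h2, h2val⟩ := Stmt17Aux.kempeEquiv_full_swap G ψ₁ (φ v) (Fin.last n)
    refine ⟨ψ₂, Relation.EqvGen.trans _ _ _ h1 h2, fun u hu => ?_⟩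
    rw [h2val u, h1S u hu, Equiv.swap_apply_left]
  constructor
  · constructor
    intro x y
    obtain ⟨φ, rfl⟩ := Quot.exists_rep x
    obtain ⟨ψ, rfl⟩ := Quot.exists_rep y
    apply Quot.sound
    obtain ⟨φ', hφ, hφm⟩ := key φ
    obtain ⟨ψ', hψ, hψm⟩ := key ψ
    have hmid : KempeEquiv G (n + 1) φ' ψ' := by
      have hq : Quot.mk (KempeEquiv (G.induce Sᶜ) n) (Stmt17Aux.restrCol G S v hv hdom φ' hφm) =
          Quot.mk (KempeEquiv (G.induce Sᶜ) n) (Stmt17Aux.restrCol G S v hv hdom ψ' hψm) :=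
        Subsingleton.elim _ _
      rw [Quot.eq] at hq
      have hq2 : KempeEquiv (G.induce Sᶜ) n (Stmt17Aux.restrCol G S v hv hdom φ' hφm)
          (Stmt17Aux.restrCol G S v hv hdom ψ' hψm) :=
        ((Relation.EqvGen.is_equivalence _).eqvGen_iff).mp hq
      have h3 := Stmt17Aux.lift_equiv G S hS hq2
      rwa [Stmt17Aux.lift_restr G S hS v hv hdom φ' hφm,
        Stmt17Aux.lift_restr G S hS v hv hdom ψ' hψm] at h3
    exact Relation.EqvGen.trans _ _ _ hφ
      (Relation.EqvGen.trans _ _ _ hmid (Relation.EqvGen.symm _ _ hψ))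
  · exact ⟨Quot.mk _ (Stmt17Aux.liftCol G S hS θ0)⟩
end
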